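/- Let μ ∈ ℤ^k and fix 1 ≤ m ≤ k. Then I_μ = Σ_{π ∈ A_{k,m}} ε(π) · ( H_{μ_1 − 1 + π_1} H_{μ_2 − 2 + π_2} ⋯ H_{μ_m − m + π_m} ) · I_{μ̃ / ν̃}, where: A_{k,m} is the set of injective maps (linear permutations) π : {1,…,m} → {1,…,k}; ε(π) = (−1)^δ with δ = #{ (i,j) : i < j ≤ m, π_i > π_j } + #{ (i,q) : i ≤ m, q ∈ {1,…,k} ∖ {π_1,…,π_m}, π_i > q }; μ̃ = (μ_{m+1},…,μ_k); and ν̃ ∈ (ℤ_{≥0})^{k−m} is given by ν̃_j = #{ i ≤ m : π_i > β_j }, with β_j the j-th smallest element of {1,…,k} ∖ {π_1,…,π_m}. -/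

import Mathlib

open scoped BigOperators

/-- NSym modeled as the free noncommutative ℚ-algebra on generators indexed by ℕ
(the generator `n` playing the role of `H_n` for `n ≥ 1`). -/
abbrev NSym : Type := FreeAlgebra ℚ ℕ

/-- The complete homogeneous noncommutative symmetric functions, extended to ℤ:
`H 0 = 1`, `H n = 0` for `n < 0`, and `H n` the `n`-th generator for `n ≥ 1`. -/
noncomputable def H (n : ℤ) : NSym :=
  if n < 0 then 0 else if n = 0 then 1 else FreeAlgebra.ι ℚ n.toNat

/-- `DecFrom k r ν` : `ν_r ≥ ν_{r+1} ≥ … ≥ ν_k` (1-based indexing). -/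
def DecFrom (k r : ℕ) (ν : ℕ → ℕ) : Prop :=
  ∀ i, r ≤ i → i < k → ν (i + 1) ≤ ν i

/-- `(p,q)` is a boundary cell of the partial GBPR diagram `D^{(r-1)}_{μ/ν}`. -/
def IsBoundary (k r : ℕ) (μ : ℕ → ℤ) (ν : ℕ → ℕ) (p q : ℕ) : Prop :=
  r ≤ p ∧ p ≤ k ∧
    (if p = r then
      ν r + 1 ≤ q ∧ (q : ℤ) ≤ max ((ν r : ℤ) + 1) (max (μ r) (2 * (ν r : ℤ) - μ r))
    else
      ν p + 1 ≤ q ∧ q ≤ ν (p - 1) + 1)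

/-- `(p,q)` is a tunnel cell of `D^{(r-1)}_{μ/ν}`. -/
def IsTunnel (k r : ℕ) (μ : ℕ → ℤ) (ν : ℕ → ℕ) (p q : ℕ) : Prop :=
  IsBoundary k r μ ν p q ∧ q = ν p + 1

/-- The set of boundary cells of `D^{(r-1)}_{μ/ν}` not tunnel cells. -/
def IsN (k r : ℕ) (μ : ℕ → ℤ) (ν : ℕ → ℕ) (p q : ℕ) : Prop :=
  IsBoundary k r μ ν p q ∧ ¬ IsTunnel k r μ ν p q

/-- The tunnel hook `h(r,τ)` for a tunnel cell `τ = (p,q)` of `D^{(r-1)}_{μ/ν}`: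
all boundary cells in rows `r` through `p`. -/
def hook (k r : ℕ) (μ : ℕ → ℤ) (ν : ℕ → ℕ) (p : ℕ) : Set (ℕ × ℕ) :=
  {c : ℕ × ℕ | IsBoundary k r μ ν c.1 c.2 ∧ c.1 ≤ p}

/-- The value `Δ(h(r,τ)) = (μ_r − ν_r) + (ν_r + 1 − q) + (p − r)` for `τ = (p,q)`. -/
def hookDelta (μ : ℕ → ℤ) (ν : ℕ → ℕ) (r p q : ℕ) : ℤ :=
  (μ r - (ν r : ℤ)) + (((ν r : ℤ) + 1) - (q : ℤ)) + ((p : ℤ) - (r : ℤ))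

/-- The update `ν ↦ ν^{(r)}`: `ν'_i = ν_{i-1} + 1` for `r < i ≤ p`, else `ν'_i = ν_i`. -/
def nuUpdate (ν : ℕ → ℕ) (r p : ℕ) : ℕ → ℕ := fun i =>
  if r < i ∧ i ≤ p then ν (i - 1) + 1 else ν i

/-- The sequence `ν^{(0)}, ν^{(1)}, …` of intermediate shapes of a tunnel hook covering
with terminal rows `p 1, p 2, …`. -/
def nuSeq (ν₀ : ℕ → ℕ) (p : ℕ → ℕ) : ℕ → ℕ → ℕ
  | 0 => ν₀
  | r + 1 => nuUpdate (nuSeq ν₀ p r) (r + 1) (p (r + 1))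

/-- A tunnel hook covering of `D_{μ/ν₀}` : for each `r = 1, …, k` a tunnel cell
`(p r, q r)` of `D^{(r-1)}_{μ/ν^{(r-1)}}` (values outside `1 ≤ r ≤ k` normalized to `0`). -/
structure THC (k : ℕ) (μ : ℕ → ℤ) (ν₀ : ℕ → ℕ) where
  p : ℕ → ℕ
  q : ℕ → ℕ
  tunnel : ∀ r, 1 ≤ r → r ≤ k → IsTunnel k r μ (nuSeq ν₀ p (r - 1)) (p r) (q r)
  p_out : ∀ r, r = 0 ∨ k < r → p r = 0
  q_out : ∀ r, r = 0 ∨ k < r → q r = 0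

/-- Row-ordered noncommutative determinant (Laplace expansion from the top row down). -/
noncomputable def ndet {k : ℕ} (A : Fin k → Fin k → NSym) : NSym :=
  ∑ σ : Equiv.Perm (Fin k),
    ((Equiv.Perm.sign σ : ℤ) • (List.ofFn fun i => A i (σ i)).prod)

/-- The immaculate function `I_μ = ndet (H_{μ_i + j − i})` (1-based `μ`). -/
noncomputable def Imm (k : ℕ) (μ : ℕ → ℤ) : NSym :=
  ndet fun i j : Fin k => H (μ (i.1 + 1) + ((j.1 : ℤ) + 1) - ((i.1 : ℤ) + 1))

/-- The skew immaculate function `I_{μ/ν} = ndet (H_{(μ_i − i) − (ν_j − j)})`. -/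
noncomputable def ImmSkew (k : ℕ) (μ ν : ℕ → ℤ) : NSym :=
  ndet fun i j : Fin k =>
    H ((μ (i.1 + 1) - ((i.1 : ℤ) + 1)) - (ν (j.1 + 1) - ((j.1 : ℤ) + 1)))

/-- The signed product `∏_{r=1}^{k} ε(h(r,τ_r)) H_{Δ(h(r,τ_r))}` attached to a
tunnel hook covering, the product taken in the order `r = 1, …, k`. -/
noncomputable def thcTerm (k : ℕ) (μ : ℕ → ℤ) (ν₀ : ℕ → ℕ) (γ : THC k μ ν₀) : NSym :=
  (List.ofFn fun r : Fin k =>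
    (-1 : NSym) ^ (γ.p (r.1 + 1) - (r.1 + 1)) *
      H (hookDelta μ (nuSeq ν₀ γ.p r.1) (r.1 + 1) (γ.p (r.1 + 1)) (γ.q (r.1 + 1)))).prod
/-- Two cells are adjacent iff their taxicab distance is 1. -/
def Adj (c d : ℕ × ℕ) : Prop :=
  ((c.1 : ℤ) - (d.1 : ℤ)).natAbs + ((c.2 : ℤ) - (d.2 : ℤ)).natAbs = 1

/-- A set of cells is connected: any two of its cells are joined by a chain of
cells of the set in which consecutive cells are adjacent. -/
def ConnectedSet (C : Set (ℕ × ℕ)) : Prop :=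
  ∀ c ∈ C, ∀ d ∈ C, ∃ l : List (ℕ × ℕ),
    l.head? = some c ∧ l.getLast? = some d ∧ (∀ x ∈ l, x ∈ C) ∧ l.Chain' Adj

/-- `m_r = #{ i < r : σ_i > σ_r }`. -/
def mcount {k : ℕ} (σ : Equiv.Perm (Fin k)) (r : Fin k) : ℕ :=
  (Finset.univ.filter fun i : Fin k => i < r ∧ σ r < σ i).card

/-- The set `{σ_{r+1}, …, σ_k}` of one-line (1-based) values of `σ` at positions `> r`. -/
def onelineTail {k : ℕ} (σ : Equiv.Perm (Fin k)) (r : ℕ) : Finset ℕ :=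
  (Finset.univ.filter fun i : Fin k => r < i.1 + 1).image fun i => (σ i).1 + 1

/-- `beta σ r t` : the `t`-th smallest element of `{σ_{r+1}, …, σ_k}`. -/
def beta {k : ℕ} (σ : Equiv.Perm (Fin k)) (r t : ℕ) : ℕ :=
  ((onelineTail σ r).sort (· ≤ ·)).getD (t - 1) 0

/-- The exponent `δ` in the sign of a linear permutation `π ∈ A_{k,m}`. -/
def lpInv {k m : ℕ} (π : Fin m ↪ Fin k) : ℕ :=
  (Finset.univ.filter fun p : Fin m × Fin m => p.1 < p.2 ∧ π p.2 < π p.1).card +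
  (Finset.univ.filter fun p : Fin m × Fin k => (∀ t, π t ≠ p.2) ∧ p.2 < π p.1).card

/-- `betaC π j` : the `j`-th smallest element of `{1,…,k} ∖ {π_1,…,π_m}` (1-based values). -/
def betaC {k m : ℕ} (π : Fin m ↪ Fin k) (j : ℕ) : ℕ :=
  (((Finset.univ.filter fun q : Fin k => ∀ t, π t ≠ q).image fun q => q.1 + 1).sort
    (· ≤ ·)).getD (j - 1) 0

/-- Coarsening `Θ(α,S)` of a sequence: replace the comma at each position in `S`
(1-based; position `i` lies between parts `i` and `i+1`) by addition. -/
def theta {α : Type} [Add α] (S : Finset ℕ) : ℕ → List α → List α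
  | _, [] => []
  | _, [a] => [a]
  | i, a :: b :: rest =>
      if i ∈ S then theta S (i + 1) ((a + b) :: rest)
      else a :: theta S (i + 1) (b :: rest)
  termination_by i l => l.length

noncomputable def Hlist (β : List ℤ) : NSym := (β.map H).prod

/-- The ribbon function `R_β = Σ_{γ ⪰ β} (−1)^{ℓ(β)−ℓ(γ)} H_γ`, with `R_β = 0`
whenever `β` has a part `≤ 0`. -/
noncomputable def Ribbon (β : List ℤ) : NSym :=
  if ∀ x ∈ β, 0 < x then
    ∑ S ∈ (Finset.Icc 1 (β.length - 1)).powerset,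
      (-1 : NSym) ^ (β.length - (theta S 1 β).length) * Hlist (theta S 1 β)
  else 0


section MainProof
open Equiv Equiv.Perm

section
variable {k m : ℕ}

/-- Complement of the range of `π`. -/
def coS (π : Fin m ↪ Fin k) : Finset (Fin k) :=
  Finset.univ.filter fun q : Fin k => ∀ t, π t ≠ q

lemma mem_coS {π : Fin m ↪ Fin k} {q : Fin k} : q ∈ coS π ↔ ∀ t, π t ≠ q := by
  simp [coS]

lemma card_coS (π : Fin m ↪ Fin k) : (coS π).card = k - m := by
  classical
  have h2 : coS π = (Finset.univ.image fun t => π t)ᶜ := by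
    ext q; simp [coS, eq_comm]
  rw [h2, Finset.card_compl, Finset.card_image_of_injective _ π.injective]
  simp

/-- Monotone enumeration of the complement. -/
noncomputable def cEmb (π : Fin m ↪ Fin k) : Fin (k - m) ↪o Fin k :=
  (coS π).orderEmbOfFin (card_coS π)

lemma cEmb_mem (π : Fin m ↪ Fin k) (j : Fin (k - m)) : cEmb π j ∈ coS π :=
  Finset.orderEmbOfFin_mem _ _ _

lemma cEmb_ne (π : Fin m ↪ Fin k) (j : Fin (k - m)) (t : Fin m) : π t ≠ cEmb π j :=
  mem_coS.mp (cEmb_mem π j) t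

noncomputable def coIdx (π : Fin m ↪ Fin k) (q : Fin k) (hq : q ∈ coS π) : Fin (k - m) :=
  ((coS π).orderIsoOfFin (card_coS π)).symm ⟨q, hq⟩

lemma cEmb_coIdx (π : Fin m ↪ Fin k) (q : Fin k) (hq : q ∈ coS π) :
    cEmb π (coIdx π q hq) = q := by
  have := ((coS π).orderIsoOfFin (card_coS π)).apply_symm_apply ⟨q, hq⟩
  have h2 := congrArg Subtype.val this
  rwa [Finset.coe_orderIsoOfFin_apply] at h2

noncomputable def phiFun (π : Fin m ↪ Fin k) (τ : Perm (Fin (k - m))) : Fin k → Fin k :=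
  fun i => if h : i.1 < m then π ⟨i.1, h⟩
    else cEmb π (τ ⟨i.1 - m, by have := i.2; omega⟩)

lemma phiFun_inj (π : Fin m ↪ Fin k) (τ : Perm (Fin (k - m))) :
    Function.Injective (phiFun π τ) := by
  intro a b hab
  unfold phiFun at hab
  split_ifs at hab with h1 h2 h2
  · have := π.injective hab
    have := congrArg Fin.val this
    exact Fin.ext (by simpa using this)
  · exact absurd hab (cEmb_ne π _ _)
  · exact absurd hab.symm (cEmb_ne π _ _)
  · have := τ.injective ((cEmb π).injective hab)
    have := congrArg Fin.val this
    simp only at this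
    exact Fin.ext (by omega)

noncomputable def phi (π : Fin m ↪ Fin k) (τ : Perm (Fin (k - m))) : Perm (Fin k) :=
  Equiv.ofBijective (phiFun π τ) (Finite.injective_iff_bijective.mp (phiFun_inj π τ))

lemma phi_apply_lt (π : Fin m ↪ Fin k) (τ : Perm (Fin (k - m))) (i : Fin k) (h : i.1 < m) :
    phi π τ i = π ⟨i.1, h⟩ := by
  simp [phi, Equiv.ofBijective, phiFun, dif_pos h]

lemma phi_apply_ge (π : Fin m ↪ Fin k) (τ : Perm (Fin (k - m))) (i : Fin k) (h : ¬ i.1 < m) :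
    phi π τ i = cEmb π (τ ⟨i.1 - m, by have := i.2; omega⟩) := by
  simp [phi, Equiv.ofBijective, phiFun, dif_neg h]

lemma phi_apply_ge' (π : Fin m ↪ Fin k) (τ : Perm (Fin (k - m))) (i : Fin k) (j : Fin (k - m))
    (h : i.1 = m + j.1) : phi π τ i = cEmb π (τ j) := by
  rw [phi_apply_ge π τ i (by omega)]
  exact congrArg (cEmb π) (congrArg τ (Fin.ext (show i.1 - m = j.1 by omega)))

lemma phi_bijective (hmk : m ≤ k) :
    Function.Bijective (fun pt : (Fin m ↪ Fin k) × Perm (Fin (k - m)) => phi pt.1 pt.2) := by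
  classical
  rw [Fintype.bijective_iff_injective_and_card]
  constructor
  · rintro ⟨π, τ⟩ ⟨π', τ'⟩ h
    simp only at h
    have happ : ∀ i : Fin k, phi π τ i = phi π' τ' i := fun i => by rw [h]
    have hπ : π = π' := by
      ext t
      have hlt : t.1 < k := lt_of_lt_of_le t.2 hmk
      have h1 := phi_apply_lt π τ ⟨t.1, hlt⟩ t.2
      have h2 := phi_apply_lt π' τ' ⟨t.1, hlt⟩ t.2
      have h3 := happ ⟨t.1, hlt⟩
      rw [h1, h2] at h3
      have h4 : (⟨t.1, t.2⟩ : Fin m) = t := Fin.ext rfl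
      rw [h4] at h3
      exact congrArg Fin.val h3
    subst hπ
    have hτ : τ = τ' := by
      apply Equiv.ext
      intro j
      have hj : m + j.1 < k := by have := j.2; omega
      have e1 := phi_apply_ge' π τ ⟨m + j.1, hj⟩ j rfl
      have e2 := phi_apply_ge' π τ' ⟨m + j.1, hj⟩ j rfl
      have e3 := happ ⟨m + j.1, hj⟩
      rw [e1, e2] at e3
      exact (cEmb π).injective e3
    rw [hτ]
  · rw [Fintype.card_prod, Fintype.card_perm, Fintype.card_perm, Fintype.card_embedding_eq]
    simp only [Fintype.card_fin]
    rw [Nat.descFactorial_eq_div hmk]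
    rw [Nat.div_mul_cancel (Nat.factorial_dvd_factorial (Nat.sub_le k m))]

def tailEquiv (k m : ℕ) : Fin (k - m) ≃ {i : Fin k // m ≤ i.1} where
  toFun j := ⟨⟨m + j.1, by have := j.2; omega⟩, by simp⟩
  invFun i := ⟨i.1.1 - m, by have := i.1.2; have := i.2; omega⟩
  left_inv j := Fin.ext (by simp)
  right_inv i := Subtype.ext (Fin.ext (by have := i.2; simp; omega))

lemma phi_mul (π : Fin m ↪ Fin k) (τ : Perm (Fin (k - m))) :
    phi π τ = phi π 1 * (τ.extendDomain (tailEquiv k m)) := by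
  apply Equiv.ext; intro i
  rw [Perm.mul_apply]
  by_cases h : i.1 < m
  · rw [show ((τ.extendDomain (tailEquiv k m)) i) = i from
      Perm.extendDomain_apply_not_subtype τ (tailEquiv k m) (show ¬ m ≤ i.1 by omega)]
    rw [phi_apply_lt _ _ _ h, phi_apply_lt _ _ _ h]
  · have hm : m ≤ i.1 := le_of_not_gt h
    have hj : i.1 - m < k - m := by have := i.2; omega
    rw [show ((τ.extendDomain (tailEquiv k m)) i)
        = ↑(tailEquiv k m (τ ((tailEquiv k m).symm ⟨i, hm⟩))) from
      Perm.extendDomain_apply_subtype τ (tailEquiv k m) hm]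
    rw [phi_apply_ge' π τ i ⟨i.1 - m, hj⟩ (by simp; omega)]
    rw [phi_apply_ge' π 1 _ (τ ((tailEquiv k m).symm ⟨i, hm⟩)) rfl]
    simp only [Perm.one_apply]
    congr 1

lemma my_sign_eq_signAux : ∀ {n : ℕ} (f : Perm (Fin n)), Perm.sign f = Perm.signAux f
  | 0, f => by
    have : f = 1 := Equiv.ext fun x => x.elim0
    subst this; simp [Perm.signAux_one]
  | 1, f => by
    have : f = 1 := Equiv.ext fun x => Subsingleton.elim _ _
    subst this; simp [Perm.signAux_one]
  | (n+2), f => by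
    have hsurj : Function.Surjective
        (MonoidHom.mk' Perm.signAux Perm.signAux_mul : Perm (Fin (n+2)) →* ℤˣ) := by
      intro u
      rcases Int.units_eq_one_or u with h | h
      · exact ⟨1, by simp [h, Perm.signAux_one]⟩
      · refine ⟨Equiv.swap 0 1, ?_⟩
        rw [h]
        exact Perm.signAux_swap (x := 0) (y := 1) (by simp [Fin.ext_iff])
    have h2 := Perm.eq_sign_of_surjective_hom hsurj
    have h3 : (MonoidHom.mk' Perm.signAux Perm.signAux_mul : Perm (Fin (n+2)) →* ℤˣ) f
        = Perm.sign f := by rw [h2]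
    exact h3.symm

lemma signAux_eq_pow {n : ℕ} (f : Perm (Fin n)) :
    Perm.signAux f
      = (-1) ^ ((Perm.finPairsLT n).filter fun x => f x.1 ≤ f x.2).card := by
  rw [Perm.signAux, Finset.prod_ite, Finset.prod_const, Finset.prod_const, one_pow, mul_one]

lemma phi_one_tail_lt (π : Fin m ↪ Fin k) {a b : Fin k} (ha : ¬ a.1 < m) (hb : ¬ b.1 < m)
    (h : b < a) : phi π 1 b < phi π 1 a := by
  rw [phi_apply_ge' π 1 a ⟨a.1 - m, by have := a.2; omega⟩ (by simp; omega),
    phi_apply_ge' π 1 b ⟨b.1 - m, by have := b.2; omega⟩ (by simp; omega)]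
  simp only [Perm.one_apply]
  exact (cEmb π).strictMono (by rw [Fin.lt_def] at h ⊢; simp; omega)

lemma memF2_spec {π : Fin m ↪ Fin k} {x : Σ _ : Fin k, Fin k}
    (hx : x ∈ ((Perm.finPairsLT k).filter fun y => phi π 1 y.1 ≤ phi π 1 y.2).filter
      fun y => ¬ y.1.1 < m) :
    x.2.1 < m ∧ ¬ x.1.1 < m ∧ phi π 1 x.1 ≤ phi π 1 x.2 ∧ x.2 < x.1 := by
  obtain ⟨h1, h2⟩ := Finset.mem_filter.mp hx
  obtain ⟨h3, h4⟩ := Finset.mem_filter.mp h1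
  have h5 := Perm.mem_finPairsLT.mp h3
  refine ⟨?_, h2, h4, h5⟩
  by_contra hb
  exact absurd h4 (not_le.mpr (phi_one_tail_lt π h2 hb h5))

lemma memF1_spec {π : Fin m ↪ Fin k} {x : Σ _ : Fin k, Fin k}
    (hx : x ∈ ((Perm.finPairsLT k).filter fun y => phi π 1 y.1 ≤ phi π 1 y.2).filter
      fun y => y.1.1 < m) :
    x.2.1 < x.1.1 ∧ x.1.1 < m ∧ phi π 1 x.1 ≤ phi π 1 x.2 := by
  obtain ⟨h1, h2⟩ := Finset.mem_filter.mp hx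
  obtain ⟨h3, h4⟩ := Finset.mem_filter.mp h1
  exact ⟨Perm.mem_finPairsLT.mp h3, h2, h4⟩

lemma cardF1 (hmk : m ≤ k) (π : Fin m ↪ Fin k) :
    (((Perm.finPairsLT k).filter fun y => phi π 1 y.1 ≤ phi π 1 y.2).filter
        fun y => y.1.1 < m).card
      = (Finset.univ.filter fun p : Fin m × Fin m => p.1 < p.2 ∧ π p.2 < π p.1).card := by
  refine Finset.card_bij'
    (fun x hx => ((⟨x.2.1, lt_trans (memF1_spec hx).1 (memF1_spec hx).2.1⟩ : Fin m),
      (⟨x.1.1, (memF1_spec hx).2.1⟩ : Fin m)))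
    (fun p hp => ⟨⟨p.2.1, lt_of_lt_of_le p.2.2 hmk⟩, ⟨p.1.1, lt_of_lt_of_le p.1.2 hmk⟩⟩)
    ?_ ?_ ?_ ?_
  · intro x hx
    obtain ⟨hlt, hm1, hle⟩ := memF1_spec hx
    rw [Finset.mem_filter]
    refine ⟨Finset.mem_univ _, hlt, ?_⟩
    rw [phi_apply_lt π 1 x.1 hm1, phi_apply_lt π 1 x.2 (lt_trans hlt hm1)] at hle
    refine lt_of_le_of_ne hle (fun hc => ?_)
    have := π.injective hc
    have := congrArg Fin.val this
    simp only at this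
    omega
  · intro p hp
    obtain ⟨-, hlt, hππ⟩ := Finset.mem_filter.mp hp
    rw [Finset.mem_filter, Finset.mem_filter, Perm.mem_finPairsLT]
    have hp2 : p.2.1 < m := p.2.2
    have hp1 : p.1.1 < m := p.1.2
    refine ⟨⟨by rw [Fin.lt_def] at hlt ⊢; exact hlt, ?_⟩, by simp only [not_lt]; omega⟩
    rw [phi_apply_lt π 1 _ (show p.2.1 < m from p.2.2),
        phi_apply_lt π 1 _ (show p.1.1 < m from p.1.2)]
    exact le_of_lt hππ
  · intro x hx; rfl
  · intro p hp; rfl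

noncomputable def F2set (π : Fin m ↪ Fin k) : Finset (Σ _ : Fin k, Fin k) :=
  ((Perm.finPairsLT k).filter fun y => phi π 1 y.1 ≤ phi π 1 y.2).filter fun y => ¬ y.1.1 < m

def Bset (π : Fin m ↪ Fin k) : Finset (Fin m × Fin k) :=
  Finset.univ.filter fun p : Fin m × Fin k => (∀ t, π t ≠ p.2) ∧ p.2 < π p.1

lemma memF2_spec' {π : Fin m ↪ Fin k} {x : Σ _ : Fin k, Fin k} (hx : x ∈ F2set π) :
    x.2.1 < m ∧ ¬ x.1.1 < m ∧ phi π 1 x.1 ≤ phi π 1 x.2 ∧ x.2 < x.1 := memF2_spec hx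

lemma memB_spec {π : Fin m ↪ Fin k} {p : Fin m × Fin k} (hp : p ∈ Bset π) :
    (∀ t, π t ≠ p.2) ∧ p.2 < π p.1 := (Finset.mem_filter.mp hp).2

noncomputable def F2i (π : Fin m ↪ Fin k) (x : Σ _ : Fin k, Fin k) (hx : x ∈ F2set π) :
    Fin m × Fin k := (⟨x.2.1, (memF2_spec' hx).1⟩, phi π 1 x.1)

noncomputable def F2j (hmk : m ≤ k) (π : Fin m ↪ Fin k) (p : Fin m × Fin k) (hp : p ∈ Bset π) :
    Σ _ : Fin k, Fin k :=
  ⟨⟨m + (coIdx π p.2 (mem_coS.mpr (memB_spec hp).1)).1,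
      by have := (coIdx π p.2 (mem_coS.mpr (memB_spec hp).1)).2; omega⟩,
    ⟨p.1.1, lt_of_lt_of_le p.1.2 hmk⟩⟩

lemma phi_one_tail_eq (π : Fin m ↪ Fin k) (a : Fin k) (ha : ¬ a.1 < m) :
    phi π 1 a = cEmb π ⟨a.1 - m, by have := a.2; omega⟩ := by
  rw [phi_apply_ge' π 1 a ⟨a.1 - m, by have := a.2; omega⟩ (by simp; omega)]
  simp only [Perm.one_apply]

lemma F2i_mem (π : Fin m ↪ Fin k) (x : Σ _ : Fin k, Fin k) (hx : x ∈ F2set π) :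
    F2i π x hx ∈ Bset π := by
  obtain ⟨h2m, h1m, hle, hlt⟩ := memF2_spec' hx
  have hx1 := phi_one_tail_eq π x.1 h1m
  rw [Bset, Finset.mem_filter, F2i]
  refine ⟨Finset.mem_univ _, fun t => ?_, ?_⟩
  · show π t ≠ phi π 1 x.1
    rw [hx1]; exact cEmb_ne π _ t
  · show phi π 1 x.1 < π ⟨x.2.1, _⟩
    rw [phi_apply_lt π 1 x.2 h2m] at hle
    refine lt_of_le_of_ne hle (fun hc => ?_)
    rw [hx1] at hc
    exact cEmb_ne π _ _ hc.symm

lemma phi_coIdx (π : Fin m ↪ Fin k) (q : Fin k) (hq : q ∈ coS π)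
    (a : Fin k) (ha : a.1 = m + (coIdx π q hq).1) : phi π 1 a = q := by
  rw [phi_apply_ge' π 1 a (coIdx π q hq) ha]
  simp only [Perm.one_apply]
  exact cEmb_coIdx π q hq

lemma F2j_mem (hmk : m ≤ k) (π : Fin m ↪ Fin k) (p : Fin m × Fin k) (hp : p ∈ Bset π) :
    F2j hmk π p hp ∈ F2set π := by
  obtain ⟨hne, hlt⟩ := memB_spec hp
  rw [F2set, Finset.mem_filter, Finset.mem_filter, Perm.mem_finPairsLT, F2j]
  have hval : phi π 1 ⟨m + (coIdx π p.2 (mem_coS.mpr (memB_spec hp).1)).1,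
      by have := (coIdx π p.2 (mem_coS.mpr (memB_spec hp).1)).2; omega⟩ = p.2 :=
    phi_coIdx π p.2 _ _ rfl
  refine ⟨⟨?_, ?_⟩, ?_⟩
  · rw [Fin.lt_def]
    simp only
    have := p.1.2
    omega
  · show phi π 1 _ ≤ phi π 1 _
    rw [hval, phi_apply_lt π 1 _ (show p.1.1 < m from p.1.2)]
    exact le_of_lt hlt
  · simp

lemma F2_left (hmk : m ≤ k) (π : Fin m ↪ Fin k) (x : Σ _ : Fin k, Fin k) (hx : x ∈ F2set π)
    (hx2 : F2i π x hx ∈ Bset π) : F2j hmk π (F2i π x hx) hx2 = x := by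
  obtain ⟨h2m, h1m, hle, hlt⟩ := memF2_spec' hx
  have hx1 := phi_one_tail_eq π x.1 h1m
  rw [F2j]
  refine Sigma.ext ?_ (heq_of_eq rfl)
  apply Fin.ext
  show m + (coIdx π ((F2i π x hx).2) _).1 = x.1.1
  have hinj : coIdx π ((F2i π x hx).2) (mem_coS.mpr (memB_spec hx2).1)
      = ⟨x.1.1 - m, by have := x.1.2; omega⟩ := by
    apply (cEmb π).injective
    rw [cEmb_coIdx]
    show (F2i π x hx).2 = _
    rw [F2i]
    exact hx1
  rw [hinj]
  simp only
  omega

lemma F2_right (hmk : m ≤ k) (π : Fin m ↪ Fin k) (p : Fin m × Fin k) (hp : p ∈ Bset π)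
    (hp2 : F2j hmk π p hp ∈ F2set π) : F2i π (F2j hmk π p hp) hp2 = p := by
  have hval : phi π 1 (F2j hmk π p hp).1 = p.2 := phi_coIdx π p.2 _ _ rfl
  rw [F2i]
  exact Prod.ext rfl hval

lemma cardF2 (hmk : m ≤ k) (π : Fin m ↪ Fin k) :
    (((Perm.finPairsLT k).filter fun y => phi π 1 y.1 ≤ phi π 1 y.2).filter
        fun y => ¬ y.1.1 < m).card
      = (Finset.univ.filter fun p : Fin m × Fin k => (∀ t, π t ≠ p.2) ∧ p.2 < π p.1).card :=
  Finset.card_bij' (F2i π) (F2j hmk π) (F2i_mem π) (F2j_mem hmk π)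
    (fun x hx => F2_left hmk π x hx _) (fun p hp => F2_right hmk π p hp _)

lemma cardF (hmk : m ≤ k) (π : Fin m ↪ Fin k) :
    ((Perm.finPairsLT k).filter fun x => phi π 1 x.1 ≤ phi π 1 x.2).card = lpInv π := by
  rw [← Finset.card_filter_add_card_filter_not
    (s := (Perm.finPairsLT k).filter fun x => phi π 1 x.1 ≤ phi π 1 x.2)
    (p := fun x => x.1.1 < m), lpInv]
  exact congrArg₂ (· + ·) (cardF1 hmk π) (cardF2 hmk π)

lemma sign_phi_one (hmk : m ≤ k) (π : Fin m ↪ Fin k) :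
    Perm.sign (phi π 1) = (-1) ^ lpInv π := by
  rw [my_sign_eq_signAux, signAux_eq_pow, cardF hmk π]

lemma sign_phi (hmk : m ≤ k) (π : Fin m ↪ Fin k) (τ : Perm (Fin (k - m))) :
    Perm.sign (phi π τ) = (-1) ^ lpInv π * Perm.sign τ := by
  rw [phi_mul π τ, Perm.sign_mul, sign_phi_one hmk π, Perm.sign_extendDomain]

lemma card_lt_cEmb (π : Fin m ↪ Fin k) (t : Fin (k - m)) :
    (cEmb π t).1 + (Finset.univ.filter fun s : Fin m => cEmb π t < π s).card = m + t.1 := by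
  classical
  set c := cEmb π t with hc
  have h1 : (Finset.univ.filter fun q : Fin k => q < c).card = c.1 := by
    have he : (Finset.univ.filter fun q : Fin k => q < c) = Finset.Iio c := by
      ext q; simp
    rw [he, Fin.card_Iio]
  have huniv : coS π ∪ Finset.univ.image π = Finset.univ := by
    ext q
    simp only [Finset.mem_union, mem_coS, Finset.mem_image, Finset.mem_univ, iff_true]
    by_cases h : ∀ t, π t ≠ q
    · exact Or.inl h
    · push_neg at h; exact Or.inr (by simpa using h)
  have hdisj : Disjoint (coS π) (Finset.univ.image π) := by
    rw [Finset.disjoint_left]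
    intro q hq hq2
    obtain ⟨t2, -, ht2⟩ := Finset.mem_image.mp hq2
    exact mem_coS.mp hq t2 ht2
  have hsplit : (Finset.univ.filter fun q : Fin k => q < c)
      = ((coS π).filter fun q => q < c) ∪ ((Finset.univ.image π).filter fun q => q < c) := by
    rw [← Finset.filter_union, huniv]
  have hcardsum : ((coS π).filter fun q => q < c).card
      + ((Finset.univ.image π).filter fun q => q < c).card = c.1 := by
    rw [← h1, hsplit, Finset.card_union_of_disjoint
      (Finset.disjoint_filter_filter hdisj)]
  have h3 : ((coS π).filter fun q => q < c).card = t.1 := by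
    have himg : (coS π).filter (fun q => q < c) = (Finset.Iio t).image (cEmb π) := by
      ext q
      constructor
      · intro hq
        obtain ⟨hqc, hqlt⟩ := Finset.mem_filter.mp hq
        refine Finset.mem_image.mpr ⟨coIdx π q hqc, ?_, cEmb_coIdx π q hqc⟩
        rw [Finset.mem_Iio]
        exact (cEmb π).lt_iff_lt.mp (by rw [cEmb_coIdx π q hqc]; exact hqlt)
      · intro hq
        obtain ⟨j, hj, rfl⟩ := Finset.mem_image.mp hq
        rw [Finset.mem_Iio] at hj
        exact Finset.mem_filter.mpr ⟨cEmb_mem π j, (cEmb π).lt_iff_lt.mpr hj⟩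
    rw [himg, Finset.card_image_of_injective _ (cEmb π).injective, Fin.card_Iio]
  have h4 : ((Finset.univ.image π).filter fun q => q < c).card
      = (Finset.univ.filter fun s : Fin m => π s < c).card := by
    rw [Finset.filter_image, Finset.card_image_of_injective _ π.injective]
  have h5 : (Finset.univ.filter fun s : Fin m => π s < c).card
      + (Finset.univ.filter fun s : Fin m => c < π s).card = m := by
    have he : (Finset.univ.filter fun s : Fin m => c < π s)
        = (Finset.univ.filter fun s : Fin m => ¬ π s < c) := by
      ext s
      simp only [Finset.mem_filter, Finset.mem_univ, true_and, not_lt]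
      constructor
      · exact le_of_lt
      · intro h
        exact lt_of_le_of_ne h (cEmb_ne π t s).symm
    rw [he, Finset.card_filter_add_card_filter_not]
    simp
  omega

lemma sort_image_coS (π : Fin m ↪ Fin k) :
    (((coS π).image fun q : Fin k => q.1 + 1).sort (· ≤ ·))
      = ((coS π).sort (· ≤ ·)).map (fun q => q.1 + 1) := by
  have hinj : Function.Injective (fun q : Fin k => q.1 + 1) := by
    intro a b hab
    simp only at hab
    exact Fin.ext (by omega)
  refine (fun hp h1 h2 => List.Perm.eq_of_pairwise' (r := (· ≤ · : ℕ → ℕ → Prop)) h1 h2 hp) ?_ ?_ ?_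
  · apply Multiset.coe_eq_coe.mp
    have lhs : ((((coS π).image fun q : Fin k => q.1 + 1).sort (· ≤ ·) : List ℕ) : Multiset ℕ)
        = ((coS π).image fun q : Fin k => q.1 + 1).1 := Finset.sort_eq _ _
    rw [lhs, Finset.image_val, Multiset.dedup_eq_self.mpr (Multiset.Nodup.map hinj (coS π).nodup)]
    show _ = ((((coS π).sort (· ≤ ·)).map fun q : Fin k => q.1 + 1 : List ℕ) : Multiset ℕ)
    rw [← Multiset.map_coe, Finset.sort_eq]
  · exact Finset.pairwise_sort _ _
  · have hs := Finset.pairwise_sort (coS π) (· ≤ ·)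
    exact List.Pairwise.map _ (fun a b (h : a ≤ b) => by simp; omega) hs

lemma length_sort_coS (π : Fin m ↪ Fin k) : ((coS π).sort (· ≤ ·)).length = k - m := by
  rw [Finset.length_sort, card_coS]

lemma betaC_spec (π : Fin m ↪ Fin k) (t : Fin (k - m)) :
    ((((Finset.univ.filter fun q : Fin k => ∀ t, π t ≠ q).image fun q => q.1 + 1).sort
      (· ≤ ·)).getD (t.1 + 1 - 1) 0) = (cEmb π t).1 + 1 := by
  have hco : (Finset.univ.filter fun q : Fin k => ∀ t, π t ≠ q) = coS π := rfl
  rw [hco, sort_image_coS]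
  have hidx : t.1 + 1 - 1 = t.1 := by omega
  rw [hidx]
  have hlen : t.1 < (((coS π).sort (· ≤ ·)).map (fun q : Fin k => q.1 + 1)).length := by
    rw [List.length_map, length_sort_coS]; exact t.2
  rw [List.getD_eq_getElem _ _ hlen, List.getElem_map]
  congr 1


end

lemma betaC_spec' {k m : ℕ} (π : Fin m ↪ Fin k) (t : Fin (k - m)) :
    betaC π (t.1 + 1) = (cEmb π t).1 + 1 := by
  rw [betaC]
  exact betaC_spec π t

lemma ofFn_cast {α : Type*} {a b : ℕ} (h : a = b) (f : Fin b → α) :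
    List.ofFn f = List.ofFn (fun i : Fin a => f (Fin.cast h i)) := by subst h; rfl

lemma list_split {k m : ℕ} (hmk : m ≤ k) (μ : ℕ → ℤ) (π : Fin m ↪ Fin k)
    (τ : Perm (Fin (k - m))) :
    (List.ofFn fun i : Fin k =>
        H (μ (i.1 + 1) + (((phi π τ i : Fin k).1 : ℤ) + 1) - ((i.1 : ℤ) + 1))).prod
      = (List.ofFn fun i : Fin m =>
          H (μ (i.1 + 1) - ((i.1 : ℤ) + 1) + ((((π i : Fin k) : ℕ) : ℤ) + 1))).prod *
        (List.ofFn fun j : Fin (k - m) =>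
          H ((μ (m + (j.1 + 1)) - ((j.1 : ℤ) + 1)) -
            (((Finset.univ.filter fun t : Fin m =>
                betaC π ((τ j).1 + 1) < ((π t : Fin k) : ℕ) + 1).card : ℤ)
              - (((τ j).1 : ℤ) + 1)))).prod := by
  have hkm : m + (k - m) = k := by omega
  rw [ofFn_cast hkm, List.ofFn_add, List.prod_append]
  congr 1
  · refine congrArg List.prod (congrArg List.ofFn (funext fun i => ?_))
    have happ : phi π τ (Fin.cast hkm (Fin.castLE (Nat.le_add_right m (k - m)) i)) = π i := by
      rw [phi_apply_lt π τ _ (show (Fin.cast hkm (Fin.castLE (Nat.le_add_right m (k - m)) i)).1 < m from i.2)]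
      exact congrArg π (Fin.ext rfl)
    rw [happ]
    simp only [Fin.coe_cast, Fin.coe_castLE]
    congr 1
    ring
  · refine congrArg List.prod (congrArg List.ofFn (funext fun j => ?_))
    have happ : phi π τ (Fin.cast hkm (Fin.natAdd m j)) = cEmb π (τ j) :=
      phi_apply_ge' π τ _ j rfl
    rw [happ]
    simp only [Fin.coe_cast, Fin.coe_natAdd]
    have hb := betaC_spec' π (τ j)
    have hfilter : (Finset.univ.filter fun t : Fin m =>
          betaC π ((τ j).1 + 1) < ((π t : Fin k) : ℕ) + 1)
        = (Finset.univ.filter fun s : Fin m => cEmb π (τ j) < π s) := by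
      ext s
      simp only [Finset.mem_filter, Finset.mem_univ, true_and, hb, Fin.lt_def]
      omega
    rw [hfilter]
    have hcount := card_lt_cEmb π (τ j)
    have hidx : m + (j.1 + 1) = m + j.1 + 1 := rfl
    rw [hidx]
    congr 1
    omega

end MainProof

/-- **Corollary (expansion into skew immaculates).** For `μ ∈ ℤ^k` and `1 ≤ m ≤ k`,
`I_μ = Σ_{π ∈ A_{k,m}} ε(π) H_{μ_1−1+π_1} ⋯ H_{μ_m−m+π_m} · I_{μ̃/ν̃}`, the sum over
all linear permutations (injections) `π : {1,…,m} → {1,…,k}`, where `ε(π) = (−1)^δ`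
with `δ` as in `lpInv`, `μ̃ = (μ_{m+1},…,μ_k)`, and `ν̃_j = #{ i ≤ m : π_i > β_j }`
with `β_j` the `j`-th smallest element of `{1,…,k} ∖ {π_1,…,π_m}`. -/
theorem immaculate_eq_sum_skew (k m : ℕ) (hm1 : 1 ≤ m) (hmk : m ≤ k) (μ : ℕ → ℤ) :
    Imm k μ = ∑ π : Fin m ↪ Fin k,
      (-1 : NSym) ^ lpInv π *
        (List.ofFn fun i : Fin m =>
          H (μ (i.1 + 1) - ((i.1 : ℤ) + 1) + (((π i : ℕ) : ℤ) + 1))).prod *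
        ImmSkew (k - m) (fun i => μ (m + i))
          (fun j => ((Finset.univ.filter fun t : Fin m =>
            betaC π j < (π t : ℕ) + 1).card : ℤ)) := by
  classical
  rw [Imm, ndet]
  refine Eq.trans (Fintype.sum_bijective
    (fun pt : (Fin m ↪ Fin k) × Equiv.Perm (Fin (k - m)) => phi pt.1 pt.2)
    (phi_bijective hmk) _ _ (fun pt => rfl)).symm ?_
  rw [Fintype.sum_prod_type]
  refine Finset.sum_congr rfl fun π _ => ?_
  rw [ImmSkew, ndet]
  have hterm : ∀ τ : Equiv.Perm (Fin (k - m)),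
      ((Equiv.Perm.sign (phi π τ) : ℤ) • (List.ofFn fun i : Fin k =>
        H (μ (i.1 + 1) + (((phi π τ i : Fin k).1 : ℤ) + 1) - ((i.1 : ℤ) + 1))).prod)
      = ((-1 : NSym) ^ lpInv π *
          (List.ofFn fun i : Fin m =>
            H (μ (i.1 + 1) - ((i.1 : ℤ) + 1) + ((((π i : Fin k) : ℕ) : ℤ) + 1))).prod) *
        ((Equiv.Perm.sign τ : ℤ) • (List.ofFn fun j : Fin (k - m) =>
          H ((μ (m + (j.1 + 1)) - ((j.1 : ℤ) + 1)) -
            (((Finset.univ.filter fun t : Fin m =>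
                betaC π ((τ j).1 + 1) < ((π t : Fin k) : ℕ) + 1).card : ℤ)
              - (((τ j).1 : ℤ) + 1)))).prod) := by
    intro τ
    rw [list_split hmk μ π τ]
    have hs : ((Equiv.Perm.sign (phi π τ) : ℤˣ) : ℤ)
        = (-1 : ℤ) ^ lpInv π * ((Equiv.Perm.sign τ : ℤˣ) : ℤ) := by
      rw [sign_phi hmk π τ]; push_cast; ring
    rw [hs, mul_smul]
    rw [show ∀ (P Q : NSym), ((Equiv.Perm.sign τ : ℤ)) • (P * Q)
        = P * ((Equiv.Perm.sign τ : ℤ) • Q) from fun P Q => (mul_smul_comm _ _ _).symm]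
    rw [zsmul_eq_mul, Int.cast_pow, Int.cast_neg, Int.cast_one, ← mul_assoc]
  refine Eq.trans (Finset.sum_congr rfl fun τ _ => hterm τ) ?_
  rw [← Finset.mul_sum]
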